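/- Let A be a unital Banach algebra and L a closed subspace of A such that b⁻¹Lb ⊆ L for every invertible b in the connected component of the identity of the group of invertibles of A. Then L is a Lie ideal: for all x ∈ L, a ∈ A, xa - ax ∈ L. -/

import Mathlib

open NormedSpace

/-- The exponential of `t • a` as a unit, with inverse `exp (-(t • a))`. -/
noncomputable def expUnit {A : Type*} [NormedRing A] [NormedAlgebra ℂ A] [CompleteSpace A]
    (a : A) (t : ℂ) : Aˣ where
  val := exp (t • a)
  inv := exp (-(t • a))
  val_inv := by
    let +nondep : NormedAlgebra ℚ A := .restrictScalars ℚ ℂ A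
    rw [← exp_add_of_commute (Commute.neg_right (Commute.refl _)), add_neg_cancel, exp_zero]
  inv_val := by
    let +nondep : NormedAlgebra ℚ A := .restrictScalars ℚ ℂ A
    rw [← exp_add_of_commute (Commute.neg_left (Commute.refl _)), neg_add_cancel, exp_zero]

lemma expUnit_mem_connectedComponent {A : Type*} [NormedRing A] [NormedAlgebra ℂ A]
    [CompleteSpace A] (a : A) (t : ℂ) :
    expUnit a t ∈ connectedComponent (1 : Aˣ) := by
  have hcont : Continuous (fun s : ℂ => expUnit a s) := by
    let +nondep : NormedAlgebra ℚ A := .restrictScalars ℚ ℂ A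
    apply Units.continuous_iff.2
    constructor
    · exact exp_continuous.comp (continuous_id.smul continuous_const)
    · exact exp_continuous.comp ((continuous_id.smul continuous_const).neg)
  have h0 : expUnit a 0 = 1 := by
    ext
    simp [expUnit]
  have := (hcont.image_connectedComponent_subset 0)
  rw [PreconnectedSpace.connectedComponent_eq_univ (0 : ℂ), h0] at this
  exact this ⟨t, Set.mem_univ t, rfl⟩

/-- Let `A` be a unital Banach algebra and `L` a closed subspace of `A`
such that `b⁻¹ L b ⊆ L` for every invertible `b` in the connected component of the
identity of the group of invertible elements of `A`.  Then `L` is a Lie ideal: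
`x * a - a * x ∈ L` for all `x ∈ L`, `a ∈ A`. -/
theorem lieIdeal_of_conj_invariant_identity_component
    {A : Type*} [NormedRing A] [NormedAlgebra ℂ A] [CompleteSpace A]
    (L : Submodule ℂ A) (hclosed : IsClosed (L : Set A))
    (hconj : ∀ b : Aˣ, b ∈ connectedComponent (1 : Aˣ) →
      ∀ x ∈ L, (↑b⁻¹ : A) * x * (b : A) ∈ L) :
    ∀ x ∈ L, ∀ a : A, x * a - a * x ∈ L := by
  intro x hx a
  set f : ℂ → A := fun t => exp (-(t • a)) * x * exp (t • a) with hf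
  have hfL : ∀ t, f t ∈ L := by
    intro t
    have := hconj (expUnit a t) (expUnit_mem_connectedComponent a t) x hx
    simpa [expUnit, Units.inv_mk] using this
  have hf0 : f 0 = x := by simp [hf]
  -- derivative of f at 0 is x * a - a * x
  have hg : HasDerivAt (fun t : ℂ => exp (-(t • a))) (-a) 0 := by
    have : HasDerivAt (fun t : ℂ => exp (t • (-a))) (exp ((0 : ℂ) • (-a)) * (-a)) 0 :=
      hasDerivAt_exp_smul_const (-a) (0 : ℂ)
    simpa [smul_neg, neg_smul] using this
  have hh : HasDerivAt (fun t : ℂ => exp (t • a)) a 0 := by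
    have : HasDerivAt (fun t : ℂ => exp (t • a)) (exp ((0 : ℂ) • a) * a) 0 :=
      hasDerivAt_exp_smul_const a (0 : ℂ)
    simpa using this
  have hderiv : HasDerivAt f (x * a - a * x) 0 := by
    have := ((hg.mul_const x).mul hh)
    simpa [hf, sub_eq_neg_add, mul_comm, Pi.mul_def] using this
  -- difference quotients lie in L, and converge to the derivative
  have hslope : Filter.Tendsto (slope f 0) (nhdsWithin 0 {(0 : ℂ)}ᶜ) (nhds (x * a - a * x)) :=
    hasDerivAt_iff_tendsto_slope.mp hderiv
  refine hclosed.mem_of_tendsto hslope ?_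
  filter_upwards with t
  have : slope f 0 t = (t - 0)⁻¹ • (f t - f 0) := rfl
  rw [this, hf0]
  exact L.smul_mem _ (L.sub_mem (hfL t) hx)
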